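/- Let J be a nondegenerate interval and (J, f_{1,∞}) a commutative m-periodic non-autonomous system of continuous surjections. If (J, f_{1,∞}) is weakly mixing, then it is Devaney chaotic: topologically transitive, has a dense set of periodic points, and is sensitive. -/

import Mathlib

open Set Filter MeasureTheory TopologicalSpace

/-- `iterN f n = f_{n-1} ∘ ⋯ ∘ f_0`, the `n`-th iterate of the non-autonomous system. -/
def iterN {X : Type*} (f : ℕ → X → X) : ℕ → X → X
  | 0 => id
  | n + 1 => f n ∘ iterN f n

/-- Topological transitivity of a non-autonomous system. -/
def NATransitive {X : Type*} [TopologicalSpace X] (f : ℕ → X → X) : Prop :=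
  ∀ U V : Set X, IsOpen U → IsOpen V → U.Nonempty → V.Nonempty →
    ∃ n : ℕ, 0 < n ∧ (iterN f n '' U ∩ V).Nonempty

/-- Weak mixing (order 2). -/
def NAWeaklyMixing {X : Type*} [TopologicalSpace X] (f : ℕ → X → X) : Prop :=
  ∀ U₁ U₂ V₁ V₂ : Set X, IsOpen U₁ → IsOpen U₂ → IsOpen V₁ → IsOpen V₂ →
    U₁.Nonempty → U₂.Nonempty → V₁.Nonempty → V₂.Nonempty →
    ∃ n : ℕ, 0 < n ∧ (iterN f n '' U₁ ∩ V₁).Nonempty ∧ (iterN f n '' U₂ ∩ V₂).Nonempty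

/-- Weak mixing of order `m`. -/
def NAWeaklyMixingOrder {X : Type*} [TopologicalSpace X] (f : ℕ → X → X) (m : ℕ) : Prop :=
  ∀ U V : Fin m → Set X, (∀ i, IsOpen (U i)) → (∀ i, IsOpen (V i)) →
    (∀ i, (U i).Nonempty) → (∀ i, (V i).Nonempty) →
    ∃ n : ℕ, 0 < n ∧ ∀ i, (iterN f n '' U i ∩ V i).Nonempty

/-- Banks's condition. -/
def NABanks {X : Type*} [TopologicalSpace X] (f : ℕ → X → X) : Prop :=
  ∀ U V W : Set X, IsOpen U → IsOpen V → IsOpen W →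
    U.Nonempty → V.Nonempty → W.Nonempty →
    ∃ n : ℕ, 0 < n ∧ (iterN f n '' U ∩ V).Nonempty ∧ (iterN f n '' U ∩ W).Nonempty

/-- Topological mixing. -/
def NAMixing {X : Type*} [TopologicalSpace X] (f : ℕ → X → X) : Prop :=
  ∀ U V : Set X, IsOpen U → IsOpen V → U.Nonempty → V.Nonempty →
    ∃ N : ℕ, ∀ n ≥ N, (iterN f n '' U ∩ V).Nonempty

/-- `blockC f s k = f_{s+k-1} ∘ ⋯ ∘ f_s`. -/
def blockC {X : Type*} (f : ℕ → X → X) (s k : ℕ) : X → X :=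
  iterN (fun i => f (s + i)) k

/-- The `k`-th iterate system `f_{1,∞}^{[k]}`. -/
def kthSys {X : Type*} (f : ℕ → X → X) (k : ℕ) : ℕ → X → X :=
  fun n => blockC f (n * k) k

/-- The induced non-autonomous system on Borel probability measures (pushforwards). -/
noncomputable def inducedM {X : Type*} [MeasurableSpace X] [TopologicalSpace X]
    [BorelSpace X] (f : ℕ → X → X) (hf : ∀ n, Continuous (f n)) :
    ℕ → ProbabilityMeasure X → ProbabilityMeasure X :=
  fun n μ => μ.map ((hf n).measurable.aemeasurable)

/-- The induced non-autonomous system on the hyperspace of non-empty compact subsets. -/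
def inducedK {X : Type*} [TopologicalSpace X] (f : ℕ → X → X) (hf : ∀ n, Continuous (f n)) :
    ℕ → NonemptyCompacts X → NonemptyCompacts X :=
  fun n K => ⟨⟨f n '' (K : Set X), K.isCompact.image (hf n)⟩, K.nonempty.image _⟩

/-- The set `N(U, δ)` of sensitivity times. -/
def NSet {X : Type*} [PseudoMetricSpace X] (f : ℕ → X → X) (U : Set X) (δ : ℝ) : Set ℕ :=
  {n | 0 < n ∧ ∃ x ∈ U, ∃ y ∈ U, δ < dist (iterN f n x) (iterN f n y)}

/-- Sensitive dependence on initial conditions. -/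
def NASensitive {X : Type*} [PseudoMetricSpace X] (f : ℕ → X → X) : Prop :=
  ∃ δ : ℝ, 0 < δ ∧ ∀ x : X, ∀ U : Set X, IsOpen U → x ∈ U →
    ∃ y ∈ U, ∃ n : ℕ, 0 < n ∧ δ < dist (iterN f n x) (iterN f n y)

/-- A thick subset of ℕ. -/
def ThickSet (S : Set ℕ) : Prop := ∀ p : ℕ, ∃ n : ℕ, ∀ j ≤ p, n + j ∈ S

/-- A syndetic subset of ℕ. -/
def SyndeticSet (S : Set ℕ) : Prop := ∃ a : ℕ, ∀ i : ℕ, ∃ j, i ≤ j ∧ j ≤ i + a ∧ j ∈ S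

/-- Upper density of a subset of ℕ. -/
noncomputable def upperDens (S : Set ℕ) : ℝ :=
  Filter.limsup (fun n : ℕ => (Nat.card ↥(S ∩ Set.Iio n) : ℝ) / n) Filter.atTop

/-- Periodic point of a non-autonomous system. -/
def NAPeriodicPt {X : Type*} (f : ℕ → X → X) (x : X) : Prop :=
  ∃ n : ℕ, 0 < n ∧ ∀ k : ℕ, 0 < k → iterN f (n * k) x = x

-- auxiliary lemmas to append
section Aux

variable {X : Type*}

lemma iterN_succ' (f : ℕ → X → X) (n : ℕ) : iterN f (n + 1) = f n ∘ iterN f n := rfl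

lemma blockC_succ (f : ℕ → X → X) (s k : ℕ) :
    blockC f s (k + 1) = f (s + k) ∘ blockC f s k := rfl

lemma iterN_add (f : ℕ → X → X) (a b : ℕ) :
    iterN f (a + b) = blockC f a b ∘ iterN f a := by
  induction b with
  | zero => rfl
  | succ b ih =>
    show iterN f ((a + b) + 1) = _
    rw [iterN_succ', ih, blockC_succ]
    rfl

lemma iterN_continuous [TopologicalSpace X] {f : ℕ → X → X}
    (hf : ∀ n, Continuous (f n)) : ∀ n, Continuous (iterN f n)
  | 0 => continuous_id
  | n + 1 => (hf n).comp (iterN_continuous hf n)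

lemma iterN_surjective {f : ℕ → X → X}
    (hf : ∀ n, Function.Surjective (f n)) : ∀ n, Function.Surjective (iterN f n)
  | 0 => Function.surjective_id
  | n + 1 => (hf n).comp (iterN_surjective hf n)

lemma f_comp_iterN {f : ℕ → X → X} (hc : ∀ i j, f i ∘ f j = f j ∘ f i) (i : ℕ) :
    ∀ n, f i ∘ iterN f n = iterN f n ∘ f i
  | 0 => rfl
  | n + 1 => by
    show f i ∘ (f n ∘ iterN f n) = (f n ∘ iterN f n) ∘ f i
    calc f i ∘ (f n ∘ iterN f n) = (f i ∘ f n) ∘ iterN f n := rfl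
      _ = (f n ∘ f i) ∘ iterN f n := by rw [hc i n]
      _ = f n ∘ (f i ∘ iterN f n) := rfl
      _ = f n ∘ (iterN f n ∘ f i) := by rw [f_comp_iterN hc i n]
      _ = (f n ∘ iterN f n) ∘ f i := rfl

lemma iterN_comm {f : ℕ → X → X} (hc : ∀ i j, f i ∘ f j = f j ∘ f i) :
    ∀ n k, iterN f n ∘ iterN f k = iterN f k ∘ iterN f n
  | 0, k => rfl
  | n + 1, k => by
    show (f n ∘ iterN f n) ∘ iterN f k = iterN f k ∘ (f n ∘ iterN f n)
    calc (f n ∘ iterN f n) ∘ iterN f k = f n ∘ (iterN f n ∘ iterN f k) := rfl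
      _ = f n ∘ (iterN f k ∘ iterN f n) := by rw [iterN_comm hc n k]
      _ = (f n ∘ iterN f k) ∘ iterN f n := rfl
      _ = (iterN f k ∘ f n) ∘ iterN f n := by rw [f_comp_iterN hc n k]
      _ = iterN f k ∘ (f n ∘ iterN f n) := rfl

lemma f_periodic {f : ℕ → X → X} {m : ℕ} (hper : ∀ n, f (n + m) = f n) :
    ∀ q n, f (n + q * m) = f n := by
  intro q
  induction q with
  | zero => intro n; simp
  | succ q ih =>
    intro n
    have e : n + (q + 1) * m = (n + q * m) + m := by ring
    rw [e, hper, ih]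

lemma blockC_mul_eq_iterN {f : ℕ → X → X} {m : ℕ} (hper : ∀ n, f (n + m) = f n)
    (q : ℕ) : ∀ r, blockC f (q * m) r = iterN f r := by
  intro r
  induction r with
  | zero => rfl
  | succ r ih =>
    rw [blockC_succ, ih, iterN_succ']
    congr 1
    have e : q * m + r = r + q * m := by ring
    rw [e, f_periodic hper]

lemma iterN_mul_left {f : ℕ → X → X} {m : ℕ} (hper : ∀ n, f (n + m) = f n) :
    ∀ q, iterN f (m * q) = (iterN f m)^[q] := by
  intro q
  induction q with
  | zero =>
    have e : m * 0 = 0 := by ring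
    rw [e]; rfl
  | succ q ih =>
    have e : m * (q + 1) = m * q + m := by ring
    rw [e, iterN_add, ih]
    have e2 : m * q = q * m := by ring
    rw [e2, blockC_mul_eq_iterN hper, Function.iterate_succ']

lemma iterN_decomp {f : ℕ → X → X} {m : ℕ} (hm : 0 < m)
    (hc : ∀ i j, f i ∘ f j = f j ∘ f i) (hper : ∀ n, f (n + m) = f n) (n : ℕ) :
    iterN f n = (iterN f m)^[n / m] ∘ iterN f (n % m) := by
  have e : n = m * (n / m) + n % m := (Nat.div_add_mod n m).symm
  calc iterN f n = iterN f (m * (n / m) + n % m) := by rw [← e]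
    _ = blockC f (m * (n / m)) (n % m) ∘ iterN f (m * (n / m)) := iterN_add f _ _
    _ = iterN f (n % m) ∘ iterN f (m * (n / m)) := by
        have e2 : m * (n / m) = (n / m) * m := by ring
        rw [e2, blockC_mul_eq_iterN hper]
    _ = iterN f (m * (n / m)) ∘ iterN f (n % m) := iterN_comm hc _ _
    _ = (iterN f m)^[n / m] ∘ iterN f (n % m) := by rw [iterN_mul_left hper]

lemma hit_mono [TopologicalSpace X] {F : X → X} {U V U' V' : Set X}
    (hU : U ⊆ U') (hV : V ⊆ V') (h : (F '' U ∩ V).Nonempty) :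
    (F '' U' ∩ V').Nonempty :=
  h.mono (Set.inter_subset_inter (Set.image_mono hU) hV)

/-- Furstenberg's intersection lemma, non-autonomous commuting version. -/
lemma furstenberg_lemma [TopologicalSpace X] {f : ℕ → X → X}
    (hcont : ∀ n, Continuous (iterN f n))
    (hcomm : ∀ n k, iterN f n ∘ iterN f k = iterN f k ∘ iterN f n)
    (h : NAWeaklyMixing f) (U₁ V₁ U₂ V₂ : Set X)
    (hU₁ : IsOpen U₁) (hV₁ : IsOpen V₁) (hU₂ : IsOpen U₂) (hV₂ : IsOpen V₂)
    (neU₁ : U₁.Nonempty) (neV₁ : V₁.Nonempty) (neU₂ : U₂.Nonempty) (neV₂ : V₂.Nonempty) :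
    ∃ U₃ V₃ : Set X, IsOpen U₃ ∧ IsOpen V₃ ∧ U₃.Nonempty ∧ V₃.Nonempty ∧
      U₃ ⊆ U₁ ∧ V₃ ⊆ V₁ ∧
      ∀ k, (iterN f k '' U₃ ∩ V₃).Nonempty → (iterN f k '' U₂ ∩ V₂).Nonempty := by
  obtain ⟨n, -, h1, h2⟩ := h U₁ V₁ U₂ V₂ hU₁ hV₁ hU₂ hV₂ neU₁ neV₁ neU₂ neV₂
  refine ⟨U₁ ∩ iterN f n ⁻¹' U₂, V₁ ∩ iterN f n ⁻¹' V₂,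
    hU₁.inter (hU₂.preimage (hcont n)), hV₁.inter (hV₂.preimage (hcont n)),
    ?_, ?_, Set.inter_subset_left, Set.inter_subset_left, ?_⟩
  · obtain ⟨w, ⟨x, hx, rfl⟩, hw⟩ := h1
    exact ⟨x, hx, hw⟩
  · obtain ⟨w, ⟨x, hx, rfl⟩, hw⟩ := h2
    exact ⟨x, hx, hw⟩
  · intro k hk
    obtain ⟨w, ⟨x, hx, rfl⟩, hw⟩ := hk
    refine ⟨iterN f n (iterN f k x), ⟨iterN f n x, hx.2, ?_⟩, ?_⟩
    · exact congrFun (hcomm k n) x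
    · exact hw.2

/-- Simultaneous hitting for any finite list of pairs of open sets. -/
lemma wm_list [TopologicalSpace X] {f : ℕ → X → X}
    (hcont : ∀ n, Continuous (iterN f n))
    (hcomm : ∀ n k, iterN f n ∘ iterN f k = iterN f k ∘ iterN f n)
    (h : NAWeaklyMixing f) :
    ∀ (k : ℕ) (L : List (Set X × Set X)), L.length = k →
      (∀ p ∈ L, IsOpen p.1 ∧ IsOpen p.2 ∧ p.1.Nonempty ∧ p.2.Nonempty) →
      ∃ n, 0 < n ∧ ∀ p ∈ L, (iterN f n '' p.1 ∩ p.2).Nonempty := by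
  intro k
  induction k with
  | zero =>
    intro L hL _
    refine ⟨1, one_pos, ?_⟩
    cases L with
    | nil => intro p hp; simp at hp
    | cons a L => simp at hL
  | succ k ih =>
    intro L hL hprop
    cases L with
    | nil => simp at hL
    | cons p L' =>
      cases L' with
      | nil =>
        obtain ⟨hO1, hO2, hne1, hne2⟩ := hprop p (by simp)
        obtain ⟨n, hn, h1, -⟩ := h p.1 p.1 p.2 p.2 hO1 hO1 hO2 hO2 hne1 hne1 hne2 hne2
        refine ⟨n, hn, ?_⟩
        intro q hq
        simp only [List.mem_singleton] at hq
        subst hq; exact h1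
      | cons q L'' =>
        obtain ⟨hOp1, hOp2, hnep1, hnep2⟩ := hprop p (by simp)
        obtain ⟨hOq1, hOq2, hneq1, hneq2⟩ := hprop q (by simp)
        obtain ⟨U₃, V₃, hU₃, hV₃, neU₃, neV₃, hsub₁, hsub₂, himp⟩ :=
          furstenberg_lemma hcont hcomm h p.1 p.2 q.1 q.2
            hOp1 hOp2 hOq1 hOq2 hnep1 hnep2 hneq1 hneq2
        have hlen : ((U₃, V₃) :: L'').length = k := by
          simp at hL ⊢; omega
        have hprop' : ∀ r ∈ (U₃, V₃) :: L'',
            IsOpen r.1 ∧ IsOpen r.2 ∧ r.1.Nonempty ∧ r.2.Nonempty := by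
          intro r hr
          rcases List.mem_cons.1 hr with hr | hr
          · subst hr; exact ⟨hU₃, hV₃, neU₃, neV₃⟩
          · exact hprop r (by simp [hr])
        obtain ⟨n, hn, hall⟩ := ih ((U₃, V₃) :: L'') hlen hprop'
        have hhit₃ : (iterN f n '' U₃ ∩ V₃).Nonempty := hall (U₃, V₃) List.mem_cons_self
        refine ⟨n, hn, ?_⟩
        intro r hr
        rcases List.mem_cons.1 hr with hr | hr
        · subst hr; exact hit_mono hsub₁ hsub₂ hhit₃
        rcases List.mem_cons.1 hr with hr | hr
        · subst hr; exact himp n hhit₃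
        · exact hall r (by simp [hr])

/-- Weak mixing (order 2) of the autonomous map `g = iterN f m`, with positive time. -/
lemma g_weak_mixing [TopologicalSpace X] {f : ℕ → X → X} {m : ℕ} (hm : 0 < m)
    (hf : ∀ n, Continuous (f n)) (hsurj : ∀ n, Function.Surjective (f n))
    (hc : ∀ i j, f i ∘ f j = f j ∘ f i) (hper : ∀ n, f (n + m) = f n)
    (h : NAWeaklyMixing f) (U₁ V₁ U₂ V₂ : Set X)
    (hU₁ : IsOpen U₁) (hV₁ : IsOpen V₁) (hU₂ : IsOpen U₂) (hV₂ : IsOpen V₂)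
    (neU₁ : U₁.Nonempty) (neV₁ : V₁.Nonempty) (neU₂ : U₂.Nonempty) (neV₂ : V₂.Nonempty) :
    ∃ Q, 0 < Q ∧ ((iterN f m)^[Q] '' U₁ ∩ V₁).Nonempty ∧
      ((iterN f m)^[Q] '' U₂ ∩ V₂).Nonempty := by
  have hcont := iterN_continuous hf
  have hs := iterN_surjective hsurj
  have hcomm := iterN_comm hc
  set L : List (Set X × Set X) :=
    ((List.range m).map fun r => (iterN f r ⁻¹' U₁, iterN f m ⁻¹' V₁)) ++
    ((List.range m).map fun r => (iterN f r ⁻¹' U₂, iterN f m ⁻¹' V₂)) with hLdef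
  have hprop : ∀ p ∈ L, IsOpen p.1 ∧ IsOpen p.2 ∧ p.1.Nonempty ∧ p.2.Nonempty := by
    intro p hp
    rcases List.mem_append.1 hp with hp | hp <;>
      obtain ⟨r, -, rfl⟩ := List.mem_map.1 hp
    · exact ⟨hU₁.preimage (hcont r), hV₁.preimage (hcont m),
        neU₁.preimage (hs r), neV₁.preimage (hs m)⟩
    · exact ⟨hU₂.preimage (hcont r), hV₂.preimage (hcont m),
        neU₂.preimage (hs r), neV₂.preimage (hs m)⟩
  obtain ⟨n, hn, hall⟩ := wm_list hcont hcomm h L.length L rfl hprop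
  set r := n % m with hr
  set q := n / m with hq
  have hrm : r < m := Nat.mod_lt n hm
  have hdec : iterN f n = (iterN f m)^[q] ∘ iterN f r := iterN_decomp hm hc hper n
  refine ⟨q + 1, Nat.succ_pos q, ?_, ?_⟩
  · have hm1 : (iterN f r ⁻¹' U₁, iterN f m ⁻¹' V₁) ∈ L :=
      List.mem_append_left _ (List.mem_map.2 ⟨r, List.mem_range.2 hrm, rfl⟩)
    obtain ⟨w, ⟨x, hx, rfl⟩, hw⟩ := hall _ hm1
    refine ⟨(iterN f m)^[q + 1] (iterN f r x), ⟨iterN f r x, hx, rfl⟩, ?_⟩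
    have : iterN f n x = (iterN f m)^[q] (iterN f r x) := congrFun hdec x
    rw [Function.iterate_succ_apply', ← this]
    exact hw
  · have hm2 : (iterN f r ⁻¹' U₂, iterN f m ⁻¹' V₂) ∈ L :=
      List.mem_append_right _ (List.mem_map.2 ⟨r, List.mem_range.2 hrm, rfl⟩)
    obtain ⟨w, ⟨x, hx, rfl⟩, hw⟩ := hall _ hm2
    refine ⟨(iterN f m)^[q + 1] (iterN f r x), ⟨iterN f r x, hx, rfl⟩, ?_⟩
    have : iterN f n x = (iterN f m)^[q] (iterN f r x) := congrFun hdec x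
    rw [Function.iterate_succ_apply', ← this]
    exact hw

/-- Every nonempty open subset of a nondegenerate interval contains a nondegenerate
closed interval. -/
lemma exists_Icc_subset {J : Set ℝ} (hJconn : J.OrdConnected)
    (hJ2 : ∃ a ∈ J, ∃ b ∈ J, a ≠ b) (W : Set ↥J) (hW : IsOpen W) (hne : W.Nonempty) :
    ∃ a b : ℝ, a < b ∧ ∀ t ∈ Set.Icc a b, ∃ ht : t ∈ J, (⟨t, ht⟩ : ↥J) ∈ W := by
  obtain ⟨x₀, hx₀⟩ := hne
  obtain ⟨ε, hε, hball⟩ := Metric.isOpen_iff.1 hW x₀ hx₀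
  obtain ⟨p, hp, p', hp', hpp'⟩ := hJ2
  obtain ⟨w, hwJ, hwne⟩ : ∃ w ∈ J, w ≠ (x₀ : ℝ) := by
    by_cases hcase : p = (x₀ : ℝ)
    · exact ⟨p', hp', fun hcon => hpp' (by rw [hcase, hcon])⟩
    · exact ⟨p, hp, hcase⟩
  have hx₀J : (x₀ : ℝ) ∈ J := x₀.2
  rcases lt_or_gt_of_ne hwne with hlt | hgt
  · -- w < x₀ : use [x₀ - min ε (x₀ - w)/2, x₀]
    set a := (x₀ : ℝ) - min ε ((x₀ : ℝ) - w) / 2 with ha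
    have hmin : 0 < min ε ((x₀ : ℝ) - w) := lt_min hε (by linarith)
    refine ⟨a, x₀, by simp only [ha]; linarith, ?_⟩
    intro t ht
    have h1 : w ≤ t := by
      have : min ε ((x₀ : ℝ) - w) ≤ (x₀ : ℝ) - w := min_le_right _ _
      have := ht.1; simp only [ha] at this; linarith
    have htJ : t ∈ J := hJconn.out hwJ hx₀J ⟨h1, ht.2⟩
    refine ⟨htJ, hball ?_⟩
    have h2 : min ε ((x₀ : ℝ) - w) ≤ ε := min_le_left _ _
    have h3 : (x₀ : ℝ) - t ≤ min ε ((x₀ : ℝ) - w) / 2 := by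
      have := ht.1; simp only [ha] at this; linarith
    simp only [Metric.mem_ball, Subtype.dist_eq, Real.dist_eq]
    rw [abs_lt]
    constructor <;> [skip; skip] <;> (have := ht.2; linarith)
  · -- x₀ < w
    set b := (x₀ : ℝ) + min ε (w - (x₀ : ℝ)) / 2 with hb
    have hmin : 0 < min ε (w - (x₀ : ℝ)) := lt_min hε (by linarith)
    refine ⟨x₀, b, by simp only [hb]; linarith, ?_⟩
    intro t ht
    have h1 : t ≤ w := by
      have : min ε (w - (x₀ : ℝ)) ≤ w - (x₀ : ℝ) := min_le_right _ _
      have := ht.2; simp only [hb] at this; linarith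
    have htJ : t ∈ J := hJconn.out hx₀J hwJ ⟨ht.1, h1⟩
    refine ⟨htJ, hball ?_⟩
    have h2 : min ε (w - (x₀ : ℝ)) ≤ ε := min_le_left _ _
    have h3 : t - (x₀ : ℝ) ≤ min ε (w - (x₀ : ℝ)) / 2 := by
      have := ht.2; simp only [hb] at this; linarith
    simp only [Metric.mem_ball, Subtype.dist_eq, Real.dist_eq]
    rw [abs_lt]
    constructor <;> (have := ht.1; linarith)

end Aux
/-- a commutative `m`-periodic weakly mixing non-autonomous system of
continuous surjections on a nondegenerate interval is Devaney chaotic. -/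

theorem interval_periodic_commutative_weaklyMixing_devaney {J : Set ℝ}
    (hJconn : J.OrdConnected) (hJ2 : ∃ a ∈ J, ∃ b ∈ J, a ≠ b)
    (f : ℕ → J → J) (hf : ∀ n, Continuous (f n))
    (hsurj : ∀ n, Function.Surjective (f n))
    (hc : ∀ i j, f i ∘ f j = f j ∘ f i) (m : ℕ) (hm : 0 < m)
    (hper : ∀ n, f (n + m) = f n) (h : NAWeaklyMixing f) :
    NATransitive f ∧ Dense {x : J | NAPeriodicPt f x} ∧ NASensitive f := by
  refine ⟨?_, ?_, ?_⟩
  · -- transitivity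
    intro U V hU hV neU neV
    obtain ⟨n, hn, h1, -⟩ := h U U V V hU hU hV hV neU neU neV neV
    exact ⟨n, hn, h1⟩
  · -- dense periodic points
    rw [dense_iff_inter_open]
    intro W hW hWne
    obtain ⟨a, b, hab, hIcc⟩ := exists_Icc_subset hJconn hJ2 W hW hWne
    set c : ℝ := (2 * a + b) / 3 with hcdef
    set d : ℝ := (a + 2 * b) / 3 with hddef
    have hac : a < c := by rw [hcdef]; linarith
    have hcd : c < d := by rw [hcdef, hddef]; linarith
    have hdb : d < b := by rw [hddef]; linarith
    have hIccJ : ∀ t ∈ Set.Icc a b, t ∈ J := fun t ht => (hIcc t ht).1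
    set A : Set ↥J := Subtype.val ⁻¹' (Set.Ioo a c) with hA
    set B : Set ↥J := Subtype.val ⁻¹' (Set.Ioo d b) with hB
    have hAopen : IsOpen A := isOpen_Ioo.preimage continuous_subtype_val
    have hBopen : IsOpen B := isOpen_Ioo.preimage continuous_subtype_val
    have hAne : A.Nonempty := by
      refine ⟨⟨(a + c) / 2, hIccJ _ ⟨by linarith, by linarith⟩⟩, ?_⟩
      exact ⟨by simp; linarith, by simp; linarith⟩
    have hBne : B.Nonempty := by
      refine ⟨⟨(d + b) / 2, hIccJ _ ⟨by linarith, by linarith⟩⟩, ?_⟩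
      exact ⟨by simp; linarith, by simp; linarith⟩
    obtain ⟨Q, hQ, hit1, hit2⟩ := g_weak_mixing hm hf hsurj hc hper h A B B A
      hAopen hBopen hBopen hAopen hAne hBne hBne hAne
    obtain ⟨-, ⟨x, hxA, rfl⟩, hxB⟩ := hit1
    obtain ⟨-, ⟨y, hyB, rfl⟩, hyA⟩ := hit2
    have hxA' : (x : ℝ) ∈ Set.Ioo a c := hxA
    have hxB' : (((iterN f m)^[Q] x : ↥J) : ℝ) ∈ Set.Ioo d b := hxB
    have hyB' : (y : ℝ) ∈ Set.Ioo d b := hyB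
    have hyA' : (((iterN f m)^[Q] y : ↥J) : ℝ) ∈ Set.Ioo a c := hyA
    set C : Set ↥J := Subtype.val ⁻¹' (Set.Icc a b) with hC
    have himg : Subtype.val '' C = Set.Icc a b := by
      rw [hC, Set.image_preimage_eq_inter_range, Subtype.range_val]
      exact Set.inter_eq_self_of_subset_left hIccJ
    have hpc : IsPreconnected C :=
      Topology.IsInducing.subtypeVal.isPreconnected_image.1 (by rw [himg]; exact isPreconnected_Icc)
    have hgc : Continuous ((iterN f m)^[Q] : ↥J → ↥J) := (iterN_continuous hf m).iterate Q
    have hxC : x ∈ C := ⟨hxA'.1.le, le_trans hxA'.2.le (by linarith)⟩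
    have hyC : y ∈ C := ⟨le_trans (by linarith) hyB'.1.le, hyB'.2.le⟩
    obtain ⟨z, hzC, hz⟩ := hpc.intermediate_value₂ hyC hxC
      (f := fun t : ↥J => (((iterN f m)^[Q] t : ↥J) : ℝ)) (g := fun t : ↥J => (t : ℝ))
      (continuous_subtype_val.comp hgc).continuousOn continuous_subtype_val.continuousOn
      (by linarith [hyA'.2, hyB'.1])
      (by linarith [hxA'.2, hxB'.1])
    have hfix : (iterN f m)^[Q] z = z := Subtype.ext hz
    obtain ⟨hzJ, hzW⟩ := hIcc (z : ℝ) hzC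
    have hzW' : z ∈ W := by
      have : (⟨(z : ℝ), hzJ⟩ : ↥J) = z := Subtype.ext rfl
      rwa [this] at hzW
    refine ⟨z, hzW', m * Q, Nat.mul_pos hm hQ, ?_⟩
    intro k hk
    have e : m * Q * k = m * (Q * k) := mul_assoc _ _ _
    rw [e, iterN_mul_left hper, Function.iterate_mul]
    exact Function.iterate_fixed hfix k
  · -- sensitivity
    obtain ⟨p, hp, p', hp', hpp'⟩ := hJ2
    set pa : ↥J := ⟨p, hp⟩ with hpa
    set pb : ↥J := ⟨p', hp'⟩ with hpb
    have hD : 0 < dist pa pb := by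
      rw [dist_pos]
      intro hcon
      exact hpp' (congrArg Subtype.val hcon)
    set D : ℝ := dist pa pb with hDdef
    refine ⟨D / 4, by positivity, ?_⟩
    intro x U hU hxU
    obtain ⟨n, hn, h1, h2⟩ := h U U (Metric.ball pa (D / 8)) (Metric.ball pb (D / 8))
      hU hU Metric.isOpen_ball Metric.isOpen_ball ⟨x, hxU⟩ ⟨x, hxU⟩
      ⟨pa, Metric.mem_ball_self (by positivity)⟩ ⟨pb, Metric.mem_ball_self (by positivity)⟩
    obtain ⟨-, ⟨x₁, hx₁, rfl⟩, hb₁⟩ := h1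
    obtain ⟨-, ⟨x₂, hx₂, rfl⟩, hb₂⟩ := h2
    by_cases hcase : D / 4 < dist (iterN f n x) (iterN f n x₁)
    · exact ⟨x₁, hx₁, n, hn, hcase⟩
    · push_neg at hcase
      refine ⟨x₂, hx₂, n, hn, ?_⟩
      have t1 : dist (iterN f n x₁) pa < D / 8 := Metric.mem_ball.1 hb₁
      have t2 : dist (iterN f n x₂) pb < D / 8 := Metric.mem_ball.1 hb₂
      have t3 : dist pa pb ≤ dist pa (iterN f n x₁) + dist (iterN f n x₁) (iterN f n x₂)
          + dist (iterN f n x₂) pb := dist_triangle4 _ _ _ _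
      have t4 : dist (iterN f n x₁) (iterN f n x₂) ≤ dist (iterN f n x₁) (iterN f n x)
          + dist (iterN f n x) (iterN f n x₂) := dist_triangle _ _ _
      rw [dist_comm pa (iterN f n x₁)] at t3
      rw [dist_comm (iterN f n x₁) (iterN f n x)] at t4
      linarith
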